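/- arXiv:quant-ph/0505091 — 2 statements merged into one kernel-verified Lean document; each statement's English description precedes it below -/
import Mathlib

section
/- For every three-qubit pure state ψ, the concurrence of assistance satisfies the dual monogamy inequality C_a(ρ_AB)² + C_a(ρ_AS)² ≥ 4·det ρ_A, i.e. the sum of squared concurrences of assistance of Alice's two reduced states is at least the squared concurrence C_{A(BS)}² of ψ across the A|(BS) cut. (Here det ρ_A is a nonnegative real number.) -/
open Matrix Complex Kronecker Finset
open scoped ComplexOrder

noncomputable section

abbrev TwoQubitMat := Matrix (Fin 2 × Fin 2) (Fin 2 × Fin 2) ℂ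

def sigmaY : Matrix (Fin 2) (Fin 2) ℂ := !![0, -Complex.I; Complex.I, 0]

def spinFlip (ρ : TwoQubitMat) : TwoQubitMat :=
  (sigmaY ⊗ₖ sigmaY) * ρ.map (starRingEnd ℂ) * (sigmaY ⊗ₖ sigmaY)

def matSqrt {m : Type*} [Fintype m] [DecidableEq m] (M : Matrix m m ℂ) : Matrix m m ℂ :=
  open scoped Classical in
  if h : M.PosSemidef then
    (h.1.eigenvectorUnitary : Matrix m m ℂ) * diagonal ((↑) ∘ (√·) ∘ h.1.eigenvalues) *
      (star h.1.eigenvectorUnitary : Matrix m m ℂ) else 0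

def Rmat (ρ : TwoQubitMat) : TwoQubitMat :=
  matSqrt (matSqrt ρ * spinFlip ρ * matSqrt ρ)

def CoA (ρ : TwoQubitMat) : ℝ := (Rmat ρ).trace.re

def lmin2 (M : Matrix (Fin 2) (Fin 2) ℂ) : ℝ :=
  if h : M.IsHermitian then min (h.eigenvalues 0) (h.eigenvalues 1) else 0

def maxEig4 (M : TwoQubitMat) : ℝ :=
  if h : M.IsHermitian then Finset.univ.sup' Finset.univ_nonempty h.eigenvalues else 0

def Conc (ρ : TwoQubitMat) : ℝ := max 0 (2 * maxEig4 (Rmat ρ) - (Rmat ρ).trace.re)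

def eigMultiset (M : TwoQubitMat) : Multiset ℝ :=
  if h : M.IsHermitian then Finset.univ.val.map h.eigenvalues else 0

def rhoAB (ψ : Fin 2 → Fin 2 → Fin 2 → ℂ) : TwoQubitMat :=
  fun p q => ∑ l, ψ p.1 p.2 l * (starRingEnd ℂ) (ψ q.1 q.2 l)

def rhoAS (ψ : Fin 2 → Fin 2 → Fin 2 → ℂ) : TwoQubitMat :=
  fun p q => ∑ j, ψ p.1 j p.2 * (starRingEnd ℂ) (ψ q.1 j q.2)

def rhoA (ψ : Fin 2 → Fin 2 → Fin 2 → ℂ) : Matrix (Fin 2) (Fin 2) ℂ :=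
  fun i i' => ∑ j, ∑ l, ψ i j l * (starRingEnd ℂ) (ψ i' j l)


lemma matSqrt_psd {m : Type*} [Fintype m] [DecidableEq m] {M : Matrix m m ℂ}
    (h : M.PosSemidef) : (matSqrt M).PosSemidef := by
  rw [matSqrt, dif_pos h]
  have hD : (diagonal ((↑) ∘ (√·) ∘ h.1.eigenvalues) : Matrix m m ℂ).PosSemidef := by
    refine Matrix.PosSemidef.diagonal ?_
    intro i
    simp [Real.sqrt_nonneg]
  have := hD.mul_mul_conjTranspose_same (h.1.eigenvectorUnitary : Matrix m m ℂ)
  rw [Matrix.star_eq_conjTranspose]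
  exact this

lemma matSqrt_mul_self' {m : Type*} [Fintype m] [DecidableEq m] {M : Matrix m m ℂ}
    (h : M.PosSemidef) : matSqrt M * matSqrt M = M := by
  have hU : (star (h.1.eigenvectorUnitary : Matrix m m ℂ)) *
      (h.1.eigenvectorUnitary : Matrix m m ℂ) = 1 :=
    (Matrix.mem_unitaryGroup_iff').mp h.1.eigenvectorUnitary.2
  rw [matSqrt, dif_pos h]
  conv_rhs => rw [h.1.spectral_theorem, Unitary.conjStarAlgAut_apply]
  simp only [Matrix.mul_assoc]
  rw [← Matrix.mul_assoc (star _) _ (_ * star _), hU, Matrix.one_mul, ← Matrix.mul_assoc (diagonal _) (diagonal _),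
    Matrix.diagonal_mul_diagonal]
  congr 3
  funext i
  change ((√(h.1.eigenvalues i) : ℝ) : ℂ) * ((√(h.1.eigenvalues i) : ℝ) : ℂ) = ((h.1.eigenvalues i : ℝ) : ℂ)
  rw [← Complex.ofReal_mul, Real.mul_self_sqrt (h.eigenvalues_nonneg i)]

-- general eigen trace lemmas
lemma trace_eq_sum_eigen {n : Type*} [Fintype n] [DecidableEq n] (A : Matrix n n ℂ)
    (hA : A.IsHermitian) : A.trace = ∑ i, (hA.eigenvalues i : ℂ) := by
  conv_lhs => rw [hA.spectral_theorem, Unitary.conjStarAlgAut_apply]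
  rw [Matrix.trace_mul_cycle]
  have hU : (star (hA.eigenvectorUnitary : Matrix n n ℂ)) * (hA.eigenvectorUnitary : Matrix n n ℂ) = 1 :=
    (Matrix.mem_unitaryGroup_iff').mp hA.eigenvectorUnitary.2
  rw [hU, Matrix.one_mul, Matrix.trace_diagonal]
  rfl

lemma trace_sq_eq_sum_eigen_sq {n : Type*} [Fintype n] [DecidableEq n] (A : Matrix n n ℂ)
    (hA : A.IsHermitian) : (A * A).trace = ∑ i, ((hA.eigenvalues i : ℂ))^2 := by
  have hU : (star (hA.eigenvectorUnitary : Matrix n n ℂ)) * (hA.eigenvectorUnitary : Matrix n n ℂ) = 1 :=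
    (Matrix.mem_unitaryGroup_iff').mp hA.eigenvectorUnitary.2
  set U : Matrix n n ℂ := (hA.eigenvectorUnitary : Matrix n n ℂ)
  set D : Matrix n n ℂ := Matrix.diagonal (RCLike.ofReal ∘ hA.eigenvalues)
  have key : A * A = U * (D * D) * star U := by
    conv_lhs => rw [hA.spectral_theorem]
    show (U * D * star U) * (U * D * star U) = _
    simp only [Matrix.mul_assoc]
    rw [← Matrix.mul_assoc (star U) U (D * star U), hU, Matrix.one_mul]
  rw [key, Matrix.trace_mul_cycle, ← Matrix.mul_assoc, hU, Matrix.one_mul,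
    Matrix.diagonal_mul_diagonal, Matrix.trace_diagonal]
  simp [sq]

lemma sigmaY_kron_herm : (sigmaY ⊗ₖ sigmaY)ᴴ = sigmaY ⊗ₖ sigmaY := by
  ext ⟨a,b⟩ ⟨c,d⟩
  fin_cases a <;> fin_cases b <;> fin_cases c <;> fin_cases d <;>
    simp [sigmaY, Matrix.conjTranspose_apply, Matrix.kroneckerMap_apply]

lemma spinFlip_posSemidef {ρ : TwoQubitMat} (hρ : ρ.PosSemidef) :
    (spinFlip ρ).PosSemidef := by
  have hmap : ρ.map (starRingEnd ℂ) = ρᵀ := by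
    ext i j
    rw [Matrix.map_apply, Matrix.transpose_apply]
    have := hρ.1.apply j i
    rw [← this]
    simp
  rw [spinFlip, hmap]
  have := hρ.transpose.conjTranspose_mul_mul_same (sigmaY ⊗ₖ sigmaY)
  rwa [sigmaY_kron_herm] at this

lemma CoA_sq_ge {ρ : TwoQubitMat} (hρ : ρ.PosSemidef) :
    (ρ * spinFlip ρ).trace.re ≤ CoA ρ ^ 2 := by
  have hF := spinFlip_posSemidef hρ
  have hsqrt : matSqrt ρ = matSqrt ρ := rfl
  have hM : (matSqrt ρ * spinFlip ρ * matSqrt ρ).PosSemidef := by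
    rw [hsqrt]
    have := hF.conjTranspose_mul_mul_same (matSqrt ρ)
    rwa [(matSqrt_psd hρ).1] at this
  have hRdef : Rmat ρ = matSqrt (matSqrt ρ * spinFlip ρ * matSqrt ρ) := rfl
  have hR : (Rmat ρ).PosSemidef := hRdef ▸ matSqrt_psd hM
  have hRR : Rmat ρ * Rmat ρ = matSqrt ρ * spinFlip ρ * matSqrt ρ := by
    rw [hRdef, matSqrt_mul_self' hM]
  have htrM : (matSqrt ρ * spinFlip ρ * matSqrt ρ).trace = (ρ * spinFlip ρ).trace := by
    rw [Matrix.trace_mul_cycle (matSqrt ρ) (spinFlip ρ) (matSqrt ρ), matSqrt_mul_self' hρ]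
  have h1 : CoA ρ = ∑ i, hR.1.eigenvalues i := by
    rw [CoA, trace_eq_sum_eigen _ hR.1]
    simp
  have h2 : (ρ * spinFlip ρ).trace.re = ∑ i, (hR.1.eigenvalues i) ^ 2 := by
    rw [← htrM, ← hRR, trace_sq_eq_sum_eigen_sq _ hR.1]
    simp [← Complex.ofReal_pow]
  rw [h1, h2]
  exact Finset.sum_sq_le_sq_sum_of_nonneg (fun i _ => hR.eigenvalues_nonneg i)

lemma rhoAB_psd (ψ : Fin 2 → Fin 2 → Fin 2 → ℂ) : (rhoAB ψ).PosSemidef := by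
  have : rhoAB ψ = (Matrix.of (fun (p : Fin 2 × Fin 2) (l : Fin 2) => ψ p.1 p.2 l)) *
      (Matrix.of (fun (p : Fin 2 × Fin 2) (l : Fin 2) => ψ p.1 p.2 l))ᴴ := by
    ext p q
    simp [rhoAB, Matrix.mul_apply, Matrix.conjTranspose_apply]
  rw [this]
  exact Matrix.posSemidef_self_mul_conjTranspose _

lemma rhoAS_psd (ψ : Fin 2 → Fin 2 → Fin 2 → ℂ) : (rhoAS ψ).PosSemidef := by
  have : rhoAS ψ = (Matrix.of (fun (p : Fin 2 × Fin 2) (j : Fin 2) => ψ p.1 j p.2)) *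
      (Matrix.of (fun (p : Fin 2 × Fin 2) (j : Fin 2) => ψ p.1 j p.2))ᴴ := by
    ext p q
    simp [rhoAS, Matrix.mul_apply, Matrix.conjTranspose_apply]
  rw [this]
  exact Matrix.posSemidef_self_mul_conjTranspose _

lemma rhoA_psd (ψ : Fin 2 → Fin 2 → Fin 2 → ℂ) : (rhoA ψ).PosSemidef := by
  have : rhoA ψ = (Matrix.of (fun (i : Fin 2) (q : Fin 2 × Fin 2) => ψ i q.1 q.2)) *
      (Matrix.of (fun (i : Fin 2) (q : Fin 2 × Fin 2) => ψ i q.1 q.2))ᴴ := by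
    ext i i'
    simp [rhoA, Matrix.mul_apply, Matrix.conjTranspose_apply, Fintype.sum_prod_type]
  rw [this]
  exact Matrix.posSemidef_self_mul_conjTranspose _

lemma det_rhoA_nonneg (ψ : Fin 2 → Fin 2 → Fin 2 → ℂ) : 0 ≤ (rhoA ψ).det.re := by
  have h := (rhoA_psd ψ)
  have h2 : (rhoA ψ).det = ((∏ i, h.1.eigenvalues i : ℝ) : ℂ) := by
    rw [h.1.det_eq_prod_eigenvalues]; push_cast; rfl
  rw [h2, Complex.ofReal_re]
  exact Finset.prod_nonneg fun i _ => h.eigenvalues_nonneg i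

lemma key_identity (ψ : Fin 2 → Fin 2 → Fin 2 → ℂ) :
    (rhoAB ψ * spinFlip (rhoAB ψ)).trace + (rhoAS ψ * spinFlip (rhoAS ψ)).trace
      = 4 * (rhoA ψ).det := by
  simp only [Matrix.trace, Matrix.diag, Matrix.mul_apply, spinFlip, rhoAB, rhoAS, rhoA,
    Matrix.map_apply, Matrix.kroneckerMap_apply, Matrix.det_fin_two,
    Fintype.sum_prod_type, Fin.sum_univ_two, sigmaY, map_sum, _root_.map_mul,
    Complex.conj_conj]
  norm_num [Matrix.cons_val_zero, Matrix.cons_val_one, Matrix.head_cons, Matrix.head_fin_const]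
  ring


theorem dual_monogamy_CoA (ψ : Fin 2 → Fin 2 → Fin 2 → ℂ)
    (hψ : ∑ i, ∑ j, ∑ l, Complex.normSq (ψ i j l) = 1) :
    0 ≤ (rhoA ψ).det.re ∧
    CoA (rhoAB ψ) ^ 2 + CoA (rhoAS ψ) ^ 2 ≥ 4 * (rhoA ψ).det.re := by
  constructor
  · exact det_rhoA_nonneg ψ
  · have h1 := CoA_sq_ge (rhoAB_psd ψ)
    have h2 := CoA_sq_ge (rhoAS_psd ψ)
    have hkey := congrArg Complex.re (key_identity ψ)
    simp only [Complex.add_re, Complex.mul_re] at hkey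
    norm_num at hkey
    linarith
end
end

section
/- Every traceless complex matrix is unitarily similar to a matrix with vanishing diagonal: for any M : Matrix (Fin n) (Fin n) ℂ with Tr M = 0, there exists a unitary U ∈ U(n) such that every diagonal entry of U M U† is zero. -/
open Matrix Finset

namespace THaux

variable {m : ℕ}

/-- sesquilinear form of matrix B -/
noncomputable def sq (B : Matrix (Fin m) (Fin m) ℂ) (u v : Fin m → ℂ) : ℂ :=
  ∑ k, ∑ l, u k * B k l * (starRingEnd ℂ) (v l)

/-- hermitian pairing -/
noncomputable def nm (u v : Fin m → ℂ) : ℂ :=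
  ∑ k, u k * (starRingEnd ℂ) (v k)

lemma sq_smul_left (B : Matrix (Fin m) (Fin m) ℂ) (c : ℂ) (u v : Fin m → ℂ) :
    sq B (c • u) v = c * sq B u v := by
  simp only [sq, Finset.mul_sum]
  refine Finset.sum_congr rfl fun k _ => Finset.sum_congr rfl fun l _ => ?_
  simp [Pi.smul_apply, smul_eq_mul]; ring

lemma sq_smul_right (B : Matrix (Fin m) (Fin m) ℂ) (c : ℂ) (u v : Fin m → ℂ) :
    sq B u (c • v) = (starRingEnd ℂ) c * sq B u v := by
  simp only [sq, Finset.mul_sum]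
  refine Finset.sum_congr rfl fun k _ => Finset.sum_congr rfl fun l _ => ?_
  simp [Pi.smul_apply, smul_eq_mul]; ring

lemma sq_add_left (B : Matrix (Fin m) (Fin m) ℂ) (u u' v : Fin m → ℂ) :
    sq B (u + u') v = sq B u v + sq B u' v := by
  simp only [sq, ← Finset.sum_add_distrib]
  refine Finset.sum_congr rfl fun k _ => Finset.sum_congr rfl fun l _ => ?_
  simp [Pi.add_apply]; ring

lemma sq_add_right (B : Matrix (Fin m) (Fin m) ℂ) (u v v' : Fin m → ℂ) :
    sq B u (v + v') = sq B u v + sq B u v' := by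
  simp only [sq, ← Finset.sum_add_distrib]
  refine Finset.sum_congr rfl fun k _ => Finset.sum_congr rfl fun l _ => ?_
  simp [Pi.add_apply]; ring

lemma nm_smul_left (c : ℂ) (u v : Fin m → ℂ) : nm (c • u) v = c * nm u v := by
  simp only [nm, Finset.mul_sum]
  refine Finset.sum_congr rfl fun k _ => ?_
  simp [Pi.smul_apply, smul_eq_mul]; ring

lemma nm_smul_right (c : ℂ) (u v : Fin m → ℂ) : nm u (c • v) = (starRingEnd ℂ) c * nm u v := by
  simp only [nm, Finset.mul_sum]
  refine Finset.sum_congr rfl fun k _ => ?_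
  simp [Pi.smul_apply, smul_eq_mul]; ring

lemma nm_add_left (u u' v : Fin m → ℂ) : nm (u + u') v = nm u v + nm u' v := by
  simp only [nm, ← Finset.sum_add_distrib]
  refine Finset.sum_congr rfl fun k _ => ?_
  simp [Pi.add_apply]; ring

lemma nm_add_right (u v v' : Fin m → ℂ) : nm u (v + v') = nm u v + nm u v' := by
  simp only [nm, ← Finset.sum_add_distrib]
  refine Finset.sum_congr rfl fun k _ => ?_
  simp [Pi.add_apply]; ring

lemma conj_nm (u v : Fin m → ℂ) : (starRingEnd ℂ) (nm u v) = nm v u := by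
  simp only [nm, map_sum]
  refine Finset.sum_congr rfl fun k _ => ?_
  rw [_root_.map_mul, Complex.conj_conj]; ring

lemma nm_self_eq_re (u : Fin m → ℂ) :
    nm u u = ((∑ k, Complex.normSq (u k) : ℝ) : ℂ) := by
  simp [nm, Complex.mul_conj]

lemma nm_self_nonneg (u : Fin m → ℂ) : 0 ≤ (nm u u).re := by
  rw [nm_self_eq_re]
  exact_mod_cast Finset.sum_nonneg fun k _ => Complex.normSq_nonneg _

lemma nm_self_eq_zero {u : Fin m → ℂ} (h : nm u u = 0) : u = 0 := by
  rw [nm_self_eq_re] at h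
  have h' : (∑ k, Complex.normSq (u k) : ℝ) = 0 := by exact_mod_cast h
  funext k
  have := (Finset.sum_eq_zero_iff_of_nonneg (fun k _ => Complex.normSq_nonneg (u k))).mp h' k
    (Finset.mem_univ k)
  exact Complex.normSq_eq_zero.mp this


lemma nm_expand (u v : Fin m → ℂ) (a b : ℝ) :
    nm ((a:ℂ) • u + (b:ℂ) • v) ((a:ℂ) • u + (b:ℂ) • v)
      = (a:ℂ)^2 * nm u u + (b:ℂ)^2 * nm v v + (a:ℂ)*(b:ℂ)*(nm u v + nm v u) := by
  rw [nm_add_left, nm_add_right, nm_add_right, nm_smul_left, nm_smul_left, nm_smul_right,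
    nm_smul_right, nm_smul_right, nm_smul_right, nm_smul_left, nm_smul_left,
    Complex.conj_ofReal, Complex.conj_ofReal]
  ring

lemma sq_expand (B : Matrix (Fin m) (Fin m) ℂ) (u v : Fin m → ℂ) (a b : ℝ) :
    sq B ((a:ℂ) • u + (b:ℂ) • v) ((a:ℂ) • u + (b:ℂ) • v)
      = (a:ℂ)^2 * sq B u u + (b:ℂ)^2 * sq B v v + (a:ℂ)*(b:ℂ)*(sq B u v + sq B v u) := by
  rw [sq_add_left, sq_add_right, sq_add_right, sq_smul_left, sq_smul_left, sq_smul_right,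
    sq_smul_right, sq_smul_right, sq_smul_right, sq_smul_left, sq_smul_left,
    Complex.conj_ofReal, Complex.conj_ofReal]
  ring

/-- phase choice: rotate to make the cross term real -/
lemma phase (p q : ℂ) : ∃ (z : ℂ) (cr : ℝ),
    z * (starRingEnd ℂ) z = 1 ∧ (starRingEnd ℂ) z * p + z * q = (cr : ℂ) := by
  classical
  obtain ⟨z, hz1, hz2⟩ : ∃ z : ℂ, z * (starRingEnd ℂ) z = 1 ∧
      (starRingEnd ℂ) z * (p - (starRingEnd ℂ) q) = ((‖p - (starRingEnd ℂ) q‖ : ℝ) : ℂ) := by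
    by_cases hd : p - (starRingEnd ℂ) q = 0
    · exact ⟨1, by simp, by simp [hd]⟩
    · refine ⟨(p - (starRingEnd ℂ) q) / ((‖p - (starRingEnd ℂ) q‖ : ℝ) : ℂ), ?_, ?_⟩
      · set d := p - (starRingEnd ℂ) q
        have habs : (‖d‖ : ℝ) ≠ 0 := norm_ne_zero_iff.mpr hd
        rw [map_div₀, Complex.conj_ofReal, div_mul_div_comm, Complex.mul_conj]
        rw [Complex.normSq_eq_norm_sq]
        have : ((‖d‖ : ℝ) : ℂ) * ((‖d‖ : ℝ) : ℂ) = ((‖d‖ ^ 2 : ℝ) : ℂ) := by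
          push_cast; ring
        rw [this]
        push_cast
        rw [div_self]
        exact_mod_cast pow_ne_zero 2 habs
      · set d := p - (starRingEnd ℂ) q
        have habs : (‖d‖ : ℝ) ≠ 0 := norm_ne_zero_iff.mpr hd
        rw [map_div₀, Complex.conj_ofReal]
        rw [div_mul_eq_mul_div, ← Complex.normSq_eq_conj_mul_self]
        rw [Complex.normSq_eq_norm_sq]
        rw [show ((‖d‖ ^ 2 : ℝ) : ℂ) = ((‖d‖ : ℝ):ℂ) * ((‖d‖ : ℝ):ℂ) by push_cast; ring]
        rw [mul_div_assoc, div_self (by exact_mod_cast habs), mul_one]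
  refine ⟨z, ‖p - (starRingEnd ℂ) q‖ + 2 * (z * q).re, hz1, ?_⟩
  have key : (starRingEnd ℂ) z * p + z * q
      = (starRingEnd ℂ) z * (p - (starRingEnd ℂ) q) + ((starRingEnd ℂ) (z * q) + z * q) := by
    rw [_root_.map_mul]; ring
  rw [key, hz2]
  rw [show (starRingEnd ℂ) (z * q) + z * q = z * q + (starRingEnd ℂ) (z * q) by ring,
    Complex.add_conj]
  push_cast; ring

lemma segment_core (B : Matrix (Fin m) (Fin m) ℂ) (x w : Fin m → ℂ) (cr sr : ℝ)
    (hx : nm x x = 1) (hw : nm w w = 1) (h1 : sq B x x = 1) (h0 : sq B w w = 0)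
    (hc : sq B x w + sq B w x = (cr : ℂ)) (hs : nm x w + nm w x = (sr : ℂ))
    {θ : ℝ} (hθ0 : 0 ≤ θ) (hθ1 : θ ≤ 1) :
    ∃ v : Fin m → ℂ, nm v v = 1 ∧ sq B v v = (θ : ℂ) := by
  -- sr > -2
  have hsum : nm (x + w) (x + w) = ((2 + sr : ℝ) : ℂ) := by
    have := nm_expand x w 1 1
    simp only [Complex.ofReal_one, one_smul, one_pow, one_mul] at this
    rw [this, hx, hw, hs]; push_cast; ring
  have hge : -2 ≤ sr := by
    have h0' := nm_self_nonneg (x + w)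
    rw [hsum] at h0'
    simp only [Complex.ofReal_re] at h0'
    linarith
  have hsr2 : -2 < sr := by
    rcases eq_or_lt_of_le hge with h | h
    · exfalso
      have hzero : nm (x + w) (x + w) = 0 := by rw [hsum, ← h]; norm_num
      have hxw : w = -x := by
        have h' : x + w = 0 := nm_self_eq_zero hzero
        exact (neg_eq_of_add_eq_zero_right h').symm
      rw [hxw] at h0
      have : sq B (-x) (-x) = sq B x x := by
        rw [show (-x : Fin m → ℂ) = ((-1 : ℂ)) • x by funext k; simp]
        rw [sq_smul_left, sq_smul_right, h1]
        simp
      rw [this, h1] at h0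
      exact one_ne_zero h0
    · exact h
  -- path functions
  have hnmγ : ∀ t : ℝ, nm (((1-t:ℝ):ℂ) • x + ((t:ℝ):ℂ) • w) (((1-t:ℝ):ℂ) • x + ((t:ℝ):ℂ) • w)
      = (((1-t)^2 + t^2 + t*(1-t)*sr : ℝ) : ℂ) := by
    intro t
    rw [nm_expand, hx, hw, hs]
    push_cast; ring
  have hsqγ : ∀ t : ℝ, sq B (((1-t:ℝ):ℂ) • x + ((t:ℝ):ℂ) • w) (((1-t:ℝ):ℂ) • x + ((t:ℝ):ℂ) • w)
      = (((1-t)^2 + t*(1-t)*cr : ℝ) : ℂ) := by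
    intro t
    rw [sq_expand, h1, h0, hc]
    push_cast; ring
  set η : ℝ → ℝ := fun t => (1-t)^2 + t^2 + t*(1-t)*sr with hηdef
  set μ : ℝ → ℝ := fun t => (1-t)^2 + t*(1-t)*cr with hμdef
  have hηpos : ∀ t ∈ Set.Icc (0:ℝ) 1, 0 < η t := by
    intro t ht
    obtain ⟨ht0, ht1⟩ := ht
    simp only [hηdef]
    rcases eq_or_lt_of_le (mul_nonneg ht0 (by linarith : (0:ℝ) ≤ 1 - t)) with h | h
    · rcases mul_eq_zero.mp h.symm with h' | h'
      · rw [h']; norm_num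
      · have : t = 1 := by linarith
        rw [this]; norm_num
    · nlinarith [sq_nonneg (1 - 2*t)]
  have hcont : ContinuousOn (fun t => μ t / η t) (Set.Icc (0:ℝ) 1) := by
    apply ContinuousOn.div
    · exact Continuous.continuousOn (by fun_prop)
    · exact Continuous.continuousOn (by fun_prop)
    · intro t ht; exact (hηpos t ht).ne'
  have hval0 : μ 0 / η 0 = 1 := by simp [hηdef, hμdef]
  have hval1 : μ 1 / η 1 = 0 := by simp [hηdef, hμdef]
  have hmem : θ ∈ Set.Icc (μ 1 / η 1) (μ 0 / η 0) := by
    rw [hval0, hval1]; exact ⟨hθ0, hθ1⟩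
  obtain ⟨t, htIcc, htval⟩ := intermediate_value_Icc' (by norm_num : (0:ℝ) ≤ 1) hcont hmem
  have hηt : 0 < η t := hηpos t htIcc
  have hμθ : μ t = θ * η t := by
    rw [div_eq_iff hηt.ne'] at htval
    linarith
  set r : ℝ := (Real.sqrt (η t))⁻¹ with hrdef
  have hr2 : r^2 * η t = 1 := by
    rw [hrdef, inv_pow, Real.sq_sqrt hηt.le, inv_mul_cancel₀ hηt.ne']
  refine ⟨((r:ℝ):ℂ) • (((1-t:ℝ):ℂ) • x + ((t:ℝ):ℂ) • w), ?_, ?_⟩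
  · rw [nm_smul_left, nm_smul_right, Complex.conj_ofReal, hnmγ]
    have : ((r:ℝ):ℂ) * ((r:ℝ):ℂ) * ((((1-t)^2 + t^2 + t*(1-t)*sr : ℝ)) : ℂ)
        = ((r^2 * η t : ℝ) : ℂ) := by
      simp only [hηdef]; push_cast; ring
    rw [← mul_assoc, this, hr2]
    norm_num
  · rw [sq_smul_left, sq_smul_right, Complex.conj_ofReal, hsqγ]
    have : ((r:ℝ):ℂ) * ((r:ℝ):ℂ) * ((((1-t)^2 + t*(1-t)*cr : ℝ)) : ℂ)
        = ((r^2 * μ t : ℝ) : ℂ) := by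
      simp only [hμdef]; push_cast; ring
    rw [← mul_assoc, this, hμθ]
    have : (r^2 * (θ * η t) : ℝ) = θ * (r^2 * η t) := by ring
    rw [this, hr2, mul_one]

lemma segment (B : Matrix (Fin m) (Fin m) ℂ) (x y : Fin m → ℂ)
    (hx : nm x x = 1) (hy : nm y y = 1) (h1 : sq B x x = 1) (h0 : sq B y y = 0)
    {θ : ℝ} (hθ0 : 0 ≤ θ) (hθ1 : θ ≤ 1) :
    ∃ v : Fin m → ℂ, nm v v = 1 ∧ sq B v v = (θ : ℂ) := by
  obtain ⟨z, cr, hz1, hz2⟩ := phase (sq B x y) (sq B y x)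
  set w : Fin m → ℂ := z • y with hwdef
  have hww : nm w w = 1 := by
    rw [hwdef, nm_smul_left, nm_smul_right, hy, mul_one, hz1]
  have hsqw : sq B w w = 0 := by
    rw [hwdef, sq_smul_left, sq_smul_right, h0]; ring
  have hcross : sq B x w + sq B w x = (cr : ℂ) := by
    rw [hwdef, sq_smul_right, sq_smul_left, ← hz2]
    try ring
  obtain ⟨srefl, hsrefl⟩ : ∃ sr : ℝ, nm x w + nm w x = (sr : ℂ) := by
    refine ⟨2 * (nm x w).re, ?_⟩
    rw [show nm w x = (starRingEnd ℂ) (nm x w) from (conj_nm x w).symm, Complex.add_conj]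
    try push_cast
    try ring
  exact segment_core B x w cr srefl hx hww h1 hsqw hcross hsrefl hθ0 hθ1

lemma sq_one (u v : Fin m → ℂ) : sq (1 : Matrix (Fin m) (Fin m) ℂ) u v = nm u v := by
  simp only [sq, nm, Matrix.one_apply]
  refine Finset.sum_congr rfl fun k _ => ?_
  rw [Finset.sum_eq_single k]
  · simp
  · intro l _ hlk; simp [hlk.symm]  -- if k = l condition
  · intro h; exact absurd (Finset.mem_univ k) h

lemma sq_smulM (c : ℂ) (A : Matrix (Fin m) (Fin m) ℂ) (u v : Fin m → ℂ) :
    sq (c • A) u v = c * sq A u v := by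
  simp only [sq, Finset.mul_sum]
  refine Finset.sum_congr rfl fun k _ => Finset.sum_congr rfl fun l _ => ?_
  simp [Matrix.smul_apply, smul_eq_mul]; ring

lemma sq_subM (A A' : Matrix (Fin m) (Fin m) ℂ) (u v : Fin m → ℂ) :
    sq (A - A') u v = sq A u v - sq A' u v := by
  simp only [sq, ← Finset.sum_sub_distrib]
  refine Finset.sum_congr rfl fun k _ => Finset.sum_congr rfl fun l _ => ?_
  simp [Matrix.sub_apply]; ring

lemma range_convex (A : Matrix (Fin m) (Fin m) ℂ) :
    Convex ℝ {c : ℂ | ∃ x, nm x x = 1 ∧ sq A x x = c} := by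
  intro a ha b hb θ τ hθ hτ hθτ
  obtain ⟨x, hx, hxa⟩ := ha
  obtain ⟨y, hy, hyb⟩ := hb
  by_cases hab : a = b
  · refine ⟨y, hy, ?_⟩
    rw [hyb, hab, ← add_smul, hθτ, one_smul]
  · have hne : a - b ≠ 0 := sub_ne_zero.mpr hab
    set B := (a - b)⁻¹ • (A - b • (1 : Matrix (Fin m) (Fin m) ℂ)) with hBdef
    have hB : ∀ u : Fin m → ℂ, nm u u = 1 → sq B u u = (a-b)⁻¹ * (sq A u u - b) := by
      intro u hu
      rw [hBdef, sq_smulM, sq_subM, sq_smulM, sq_one, hu, mul_one]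
    have h1 : sq B x x = 1 := by
      rw [hB x hx, hxa]
      field_simp
    have h0 : sq B y y = 0 := by
      rw [hB y hy, hyb]
      simp
    obtain ⟨v, hv, hvθ⟩ := segment B x y hx hy h1 h0 hθ (by linarith)
    refine ⟨v, hv, ?_⟩
    have hvB : sq B v v = (a-b)⁻¹ * (sq A v v - b) := hB v hv
    rw [hvθ] at hvB
    have hAv : sq A v v = (θ:ℂ) * (a - b) + b := by
      field_simp at hvB
      linear_combination -hvB
    rw [hAv]
    have hτ' : (τ:ℂ) = 1 - (θ:ℂ) := by
      have : (θ:ℂ) + (τ:ℂ) = 1 := by exact_mod_cast congrArg Complex.ofReal hθτ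
      linear_combination this
    rw [Complex.real_smul, Complex.real_smul, hτ']
    ring

lemma exists_unit_sq_zero (A : Matrix (Fin (m+1)) (Fin (m+1)) ℂ) (hA : A.trace = 0) :
    ∃ x : Fin (m+1) → ℂ, nm x x = 1 ∧ sq A x x = 0 := by
  set S : Set ℂ := {c : ℂ | ∃ x, nm x x = 1 ∧ sq A x x = c} with hSdef
  have hdiag : ∀ i : Fin (m+1), A i i ∈ S := by
    intro i
    refine ⟨fun k => if k = i then 1 else 0, ?_, ?_⟩
    · simp [nm, apply_ite (starRingEnd ℂ), ite_mul, mul_ite]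
    · simp only [sq, ite_mul, one_mul, zero_mul, apply_ite (starRingEnd ℂ), _root_.map_one, _root_.map_zero,
        mul_ite, mul_one, mul_zero]
      rw [Finset.sum_eq_single i]
      · simp
      · intro l _ hl; simp [hl]
      · intro h; exact absurd (Finset.mem_univ i) h
  have h0S : (0 : ℂ) ∈ S := by
    have hconv := range_convex A
    have hmem := hconv.sum_mem (t := Finset.univ)
      (w := fun _ : Fin (m+1) => (1 : ℝ)/(m+1)) (z := fun i => A i i)
      (fun i _ => by positivity)
      (by
        rw [Finset.sum_const, Finset.card_univ, Fintype.card_fin]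
        rw [nsmul_eq_mul]; push_cast
        field_simp)
      (fun i _ => hdiag i)
    have : ∑ i : Fin (m+1), ((1 : ℝ)/(m+1)) • A i i = 0 := by
      rw [← Finset.smul_sum]
      have htr : ∑ i : Fin (m+1), A i i = 0 := by
        rw [← hA]; rfl
      rw [htr, smul_zero]
    rwa [this] at hmem
  exact h0S

lemma entry_eq_sq (U A : Matrix (Fin m) (Fin m) ℂ) (i j : Fin m) :
    (U * A * Uᴴ) i j = sq A (U i) (U j) := by
  simp only [Matrix.mul_apply, Matrix.conjTranspose_apply, Complex.star_def]
  rw [show sq A (U i) (U j) = ∑ l, ∑ k, U i k * A k l * (starRingEnd ℂ) (U j l) from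
    Finset.sum_comm]
  refine Finset.sum_congr rfl fun l _ => ?_
  rw [Finset.sum_mul]

lemma rows_orthonormal_of_unitary {U : Matrix (Fin m) (Fin m) ℂ}
    (h : U ∈ Matrix.unitaryGroup (Fin m) ℂ) (i j : Fin m) :
    nm (U i) (U j) = if i = j then 1 else 0 := by
  have h1 := Matrix.mem_unitaryGroup_iff.mp h
  have h2 : (U * star U) i j = (1 : Matrix (Fin m) (Fin m) ℂ) i j := by rw [h1]
  rw [Matrix.star_eq_conjTranspose, Matrix.mul_apply] at h2
  simp only [Matrix.conjTranspose_apply, Complex.star_def] at h2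
  rw [Matrix.one_apply] at h2
  exact h2

lemma unitary_of_rows {U : Matrix (Fin m) (Fin m) ℂ}
    (h : ∀ i j, nm (U i) (U j) = if i = j then 1 else 0) :
    U ∈ Matrix.unitaryGroup (Fin m) ℂ := by
  rw [Matrix.mem_unitaryGroup_iff]
  ext i j
  rw [Matrix.mul_apply, Matrix.one_apply, ← h i j]
  simp only [Matrix.star_eq_conjTranspose, Matrix.conjTranspose_apply, Complex.star_def]
  rfl

lemma trace_conj {U : Matrix (Fin m) (Fin m) ℂ} (M : Matrix (Fin m) (Fin m) ℂ)
    (hU : U ∈ Matrix.unitaryGroup (Fin m) ℂ) : (U * M * Uᴴ).trace = M.trace := by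
  have h := Matrix.mem_unitaryGroup_iff'.mp hU
  rw [Matrix.trace_mul_comm (U * M) Uᴴ, ← Matrix.mul_assoc, ← Matrix.star_eq_conjTranspose,
    h, Matrix.one_mul]

lemma nm_cons (a b : ℂ) (u v : Fin m → ℂ) :
    nm (Fin.cons a u) (Fin.cons b v) = a * (starRingEnd ℂ) b + nm u v := by
  simp [nm, Fin.sum_univ_succ]

lemma nm_zero_left (v : Fin m → ℂ) : nm 0 v = 0 := by simp [nm]

lemma nm_zero_right (v : Fin m → ℂ) : nm v 0 = 0 := by simp [nm]

theorem main : ∀ (n : ℕ) (M : Matrix (Fin n) (Fin n) ℂ), M.trace = 0 →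
    ∃ U, U ∈ Matrix.unitaryGroup (Fin n) ℂ ∧ ∀ i, (U * M * Uᴴ) i i = 0 := by
  intro n
  induction n with
  | zero =>
    intro M _
    exact ⟨1, one_mem _, fun i => i.elim0⟩
  | succ m ih =>
    intro M hM
    obtain ⟨x, hx, hxM⟩ := exists_unit_sq_zero M hM
    set xE : EuclideanSpace ℂ (Fin (m+1)) := (WithLp.equiv 2 _).symm x with hxEdef
    have hxEk : ∀ k, xE k = x k := fun k => rfl
    have hinner : (inner ℂ xE xE : ℂ) = 1 := by
      rw [PiLp.inner_apply]
      simp only [RCLike.inner_apply]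
      rw [← hx]
      simp only [nm]
      exact Finset.sum_congr rfl fun k _ => by rw [hxEk]
    have hnorm : ‖xE‖ = 1 := by
      have h2 := inner_self_eq_norm_sq_to_K (𝕜 := ℂ) xE
      rw [hinner] at h2
      have h3 : ‖xE‖^2 = 1 := by
        have h4 : (RCLike.ofReal (‖xE‖^2) : ℂ) = RCLike.ofReal (1:ℝ) := by
          push_cast
          rw [← h2]
        exact_mod_cast h4
      nlinarith [norm_nonneg xE]
    have hon : Orthonormal ℂ (({0} : Set (Fin (m+1))).restrict (fun _ => xE)) := by
      constructor
      · intro i; exact hnorm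
      · intro i j hij
        exact absurd (Subtype.ext ((Set.mem_singleton_iff.mp i.2).trans
          (Set.mem_singleton_iff.mp j.2).symm)) hij
    obtain ⟨b, hb⟩ := hon.exists_orthonormalBasis_extension_of_card_eq
      (by simp [finrank_euclideanSpace_fin])
    have hb0 : b 0 = xE := hb 0 rfl
    set V : Matrix (Fin (m+1)) (Fin (m+1)) ℂ := Matrix.of (fun i k => b i k) with hVdef
    have hVnm : ∀ i j, nm (V i) (V j) = if i = j then 1 else 0 := by
      intro i j
      have hb' := orthonormal_iff_ite.mp b.orthonormal i j
      rw [PiLp.inner_apply] at hb'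
      simp only [RCLike.inner_apply] at hb'
      have hconj : nm (V i) (V j) = (starRingEnd ℂ) (∑ k, (starRingEnd ℂ) (b i k) * (b j k)) := by
        rw [map_sum]
        simp only [nm]
        refine Finset.sum_congr rfl fun k _ => ?_
        rw [_root_.map_mul, Complex.conj_conj]
        rfl
      rw [hconj, show (∑ k, (starRingEnd ℂ) (b i k) * (b j k)) = ∑ k, (b j k) * (starRingEnd ℂ) (b i k)
        from Finset.sum_congr rfl fun k _ => mul_comm _ _, hb']
      split <;> simp
    have hV : V ∈ Matrix.unitaryGroup (Fin (m+1)) ℂ := unitary_of_rows hVnm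
    set N : Matrix (Fin (m+1)) (Fin (m+1)) ℂ := V * M * Vᴴ with hNdef
    have hV0 : V 0 = x := by
      funext k
      show b 0 k = x k
      rw [hb0]
      exact hxEk k
    have hN00 : N 0 0 = 0 := by
      rw [hNdef, entry_eq_sq, hV0, hxM]
    have htrN : N.trace = 0 := by rw [hNdef, trace_conj M hV, hM]
    set B : Matrix (Fin m) (Fin m) ℂ := Matrix.of (fun i j => N i.succ j.succ) with hBdef
    have htrB : B.trace = 0 := by
      have h1 : N.trace = N 0 0 + ∑ i : Fin m, N i.succ i.succ := by
        rw [Matrix.trace]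
        simp [Matrix.diag, Fin.sum_univ_succ]
      have h2 : B.trace = ∑ i : Fin m, N i.succ i.succ := by
        rw [Matrix.trace]
        simp [Matrix.diag, hBdef]
      rw [h2]
      rw [htrN, hN00, zero_add] at h1
      exact h1.symm
    obtain ⟨W, hW, hWd⟩ := ih B htrB
    set W' : Matrix (Fin (m+1)) (Fin (m+1)) ℂ :=
      Matrix.of (Fin.cons (Fin.cons 1 0) (fun i' => Fin.cons 0 (W i'))) with hW'def
    have hW'row0 : W' 0 = Fin.cons 1 0 := by
      show (Fin.cons (Fin.cons 1 0) (fun i' => Fin.cons 0 (W i')) : Fin (m+1) → Fin (m+1) → ℂ) 0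
        = Fin.cons 1 0
      exact Fin.cons_zero _ _
    have hW'rows : ∀ i' : Fin m, W' i'.succ = Fin.cons 0 (W i') := by
      intro i'
      show (Fin.cons (Fin.cons 1 0) (fun i' => Fin.cons 0 (W i')) : Fin (m+1) → Fin (m+1) → ℂ)
        i'.succ = Fin.cons 0 (W i')
      exact Fin.cons_succ _ _ _
    have hW'u : W' ∈ Matrix.unitaryGroup (Fin (m+1)) ℂ := by
      apply unitary_of_rows
      intro i j
      refine Fin.cases ?_ ?_ i
      · refine Fin.cases ?_ ?_ j
        · rw [hW'row0, nm_cons, nm_zero_left]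
          simp
        · intro j'
          rw [hW'row0, hW'rows, nm_cons, nm_zero_left]
          simp [(Fin.succ_ne_zero j').symm]
      · intro i'
        refine Fin.cases ?_ ?_ j
        · rw [hW'row0, hW'rows, nm_cons, nm_zero_right]
          simp [Fin.succ_ne_zero i']
        · intro j'
          rw [hW'rows, hW'rows, nm_cons]
          rw [rows_orthonormal_of_unitary hW i' j']
          simp [Fin.succ_inj]
    refine ⟨W' * V, mul_mem hW'u hV, ?_⟩
    intro i
    have hassoc : W' * V * M * (W' * V)ᴴ = W' * N * W'ᴴ := by
      rw [Matrix.conjTranspose_mul, hNdef]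
      simp only [Matrix.mul_assoc]
    rw [hassoc, entry_eq_sq]
    refine Fin.cases ?_ ?_ i
    · rw [hW'row0]
      have : sq N (Fin.cons 1 0) (Fin.cons 1 0) = N 0 0 := by
        simp [sq, Fin.sum_univ_succ]
      rw [this, hN00]
    · intro i'
      rw [hW'rows]
      have hgoal : sq N (Fin.cons 0 (W i')) (Fin.cons 0 (W i')) = sq B (W i') (W i') := by
        simp [sq, Fin.sum_univ_succ, hBdef]
      rw [hgoal, ← entry_eq_sq]
      exact hWd i'

end THaux

theorem traceless_unitarily_similar_to_zero_diagonal (n : ℕ)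
    (M : Matrix (Fin n) (Fin n) ℂ) (hM : M.trace = 0) :
    ∃ U : Matrix (Fin n) (Fin n) ℂ, U ∈ Matrix.unitaryGroup (Fin n) ℂ ∧
      ∀ i : Fin n, (U * M * Uᴴ) i i = 0 := by
  obtain ⟨U, hU, hdiag⟩ := THaux.main n M hM
  exact ⟨U, hU, hdiag⟩
end
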